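/- (Width necessity under the ℓ∞ norm: first-layer collision) Let d, N, m be positive integers with 2 ≤ N and N − 1 ≤ d, let ρ ∈ (1/2, 1), and let W : ℝ^d → ℝ^m be any linear map with m < N − 1. Then there exist an index j ∈ {1, …, N − 1} and points x, x' ∈ ℝ^d such that ‖x − e_j‖_∞ < ρ/2, ‖x'‖_∞ < ρ/2, and W x = W x'. (Equivalently, some point of the open ℓ∞ ball B_∞(e_j, ρ/2) and some point of B_∞(0, ρ/2) are mapped to the same value by W, so W cannot separate these two balls.) -/

import Mathlib

/-- **Width necessity under the `ℓ∞` norm: first-layer collision.**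
If `2 ≤ N`, `N - 1 ≤ d`, `ρ ∈ (1/2, 1)`, and `W : ℝ^d → ℝ^m` is linear with
`m < N - 1`, then some point of the open `ℓ∞` ball `B_∞(e_j, ρ/2)` (for some
`j ∈ {1,…,N-1}`) and some point of `B_∞(0, ρ/2)` are mapped to the same value by `W`.
Here `ℝ^d` carries the sup norm of `Fin d → ℝ`. -/
theorem width_necessity_linf
    (d N m : ℕ) (hd : 1 ≤ d) (hm0 : 1 ≤ m) (hN : 2 ≤ N) (hNd : N - 1 ≤ d)
    (ρ : ℝ) (hρ0 : 1 / 2 < ρ) (hρ1 : ρ < 1)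
    (W : (Fin d → ℝ) →ₗ[ℝ] (Fin m → ℝ))
    (hm : m < N - 1) :
    ∃ j : Fin d, (j : ℕ) < N - 1 ∧
      ∃ x x' : Fin d → ℝ,
        ‖x - Pi.single j 1‖ < ρ / 2 ∧ ‖x'‖ < ρ / 2 ∧ W x = W x' := by
  have hρ : (0:ℝ) < ρ / 2 := by linarith
  have hq : (1:ℝ)/4 < ρ / 2 := by linarith
  haveI : Nonempty (Fin (N-1)) := ⟨⟨0, by omega⟩⟩
  set s : Fin (N-1) → Fin d := Fin.castLE hNd with hs
  have hsinj : Function.Injective s := Fin.castLE_injective hNd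
  set ι : (Fin (N-1) → ℝ) →ₗ[ℝ] (Fin d → ℝ) := Function.ExtendByZero.linearMap ℝ s with hι
  set ψ : (Fin (N-1) → ℝ) →ₗ[ℝ] (Fin m → ℝ) := W.comp ι with hψ
  have hker : LinearMap.ker ψ ≠ ⊥ := by
    intro h
    have hinj : Function.Injective ψ := LinearMap.ker_eq_bot.mp h
    have hle := LinearMap.finrank_le_finrank_of_injective hinj
    simp [Module.finrank_pi] at hle
    omega
  obtain ⟨w, hw, hw0⟩ := Submodule.exists_mem_ne_zero_of_ne_bot hker
  have hWw : W (ι w) = 0 := hw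
  obtain ⟨j0, -, hmax⟩ := Finset.exists_max_image Finset.univ (fun k => |w k|) Finset.univ_nonempty
  set v : Fin d → ℝ := ι w with hv
  set j : Fin d := s j0 with hj
  have hvs : ∀ a, v (s a) = w a := by
    intro a
    simp [hv, hι, Function.ExtendByZero.linearMap]
    exact hsinj.extend_apply w 0 a
  have hvj : v j = w j0 := hvs j0
  set b := w j0 with hb0
  have hb : b ≠ 0 := by
    intro h
    apply hw0
    funext k
    have := hmax k (Finset.mem_univ k)
    rw [h] at this
    show w k = 0
    simpa using abs_nonpos_iff.mp (by simpa using this)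
  have hbound : ∀ k, |v k| ≤ |b| := by
    intro k
    by_cases hk : ∃ a, s a = k
    · obtain ⟨a, rfl⟩ := hk
      rw [hvs a]
      exact hmax a (Finset.mem_univ a)
    · have : v k = 0 := by
        simp [hv, hι, Function.ExtendByZero.linearMap]
        exact Function.extend_apply' w (0 : Fin d → ℝ) k hk
      simp [this]
  set c : ℝ := (4*b)⁻¹ with hc
  have hcb : c * b = 1/4 := by
    rw [hc, mul_inv, mul_assoc, inv_mul_cancel₀ hb]; norm_num
  have hcv : ∀ k, |c * v k| ≤ 1/4 := by
    intro k
    rw [abs_mul, hc, abs_inv, abs_mul]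
    have h4 : |(4:ℝ)| = 4 := by norm_num
    rw [h4]
    have hbp : 0 < |b| := abs_pos.mpr hb
    rw [inv_mul_le_iff₀ (by positivity)]
    calc |v k| ≤ |b| := hbound k
      _ = 4 * |b| * (1/4) := by ring
      _ ≤ _ := le_refl _
  set x : Fin d → ℝ := (1/2:ℝ) • (Pi.single j 1 : Fin d → ℝ) + c • v with hxdef
  set x' : Fin d → ℝ := (1/2:ℝ) • (Pi.single j 1 : Fin d → ℝ) - c • v with hxdef'
  refine ⟨j, ?_, x, x', ?_, ?_, ?_⟩
  · simpa [hj, hs] using j0.isLt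
  · rw [pi_norm_lt_iff hρ]
    intro k
    rw [Real.norm_eq_abs, Pi.sub_apply, hxdef]
    by_cases hk : k = j
    · subst hk
      simp only [Pi.add_apply, Pi.smul_apply, smul_eq_mul, Pi.single_eq_same, hvj, mul_one]
      calc |1/2 + c * b - 1| = 1/4 := by rw [hcb]; norm_num
        _ < ρ/2 := hq
    · have h1 : (Pi.single j 1 : Fin d → ℝ) k = 0 := Pi.single_eq_of_ne hk 1
      simp only [Pi.add_apply, Pi.smul_apply, smul_eq_mul, h1, mul_zero, add_zero, sub_zero, zero_add]
      calc |c * v k| ≤ 1/4 := hcv k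
        _ < ρ/2 := hq
  · rw [pi_norm_lt_iff hρ]
    intro k
    rw [Real.norm_eq_abs, hxdef']
    by_cases hk : k = j
    · subst hk
      simp only [Pi.sub_apply, Pi.smul_apply, smul_eq_mul, Pi.single_eq_same, hvj, mul_one]
      calc |1/2 - c * b| = 1/4 := by rw [hcb]; norm_num
        _ < ρ/2 := hq
    · have h1 : (Pi.single j 1 : Fin d → ℝ) k = 0 := Pi.single_eq_of_ne hk 1
      simp only [Pi.sub_apply, Pi.smul_apply, smul_eq_mul, h1, mul_zero, zero_sub, abs_neg]
      calc |c * v k| ≤ 1/4 := hcv k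
        _ < ρ/2 := hq
  · simp [hxdef, hxdef', map_add, map_sub, map_smul, hWw]
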